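/- arXiv:1003.4447 — 2 statements merged into one kernel-verified Lean document; each statement's English description precedes it below -/
import Mathlib

section
/- A finite simple graph G is isomorphic to a full clique-whiskering H^π of some graph H with clique vertex-partition π if and only if there exists a clique vertex-partition ρ = (U_1, …, U_t) of G such that every clique U_i contains a vertex whose neighborhood in G is contained in U_i. -/
/-- A clique vertex-partition of `G`: a family of `t` pairwise disjoint (possibly empty)
cliques of `G` whose union is the whole vertex set. -/
structure CliquePartition {V : Type*} (G : SimpleGraph V) (t : ℕ) where
  part : Fin t → Finset V
  disj : ∀ i j, i ≠ j → Disjoint (part i) (part j)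
  cover : ∀ v, ∃ i, v ∈ part i
  clique : ∀ i, G.IsClique (part i : Set V)

/-- The clique-whiskered graph `G^π`: to each clique `W_i` of the partition a new vertex
`w_i` (encoded as `Sum.inr i`) is attached, joined to every vertex of `W_i`. -/
def whisker {V : Type*} {t : ℕ} (G : SimpleGraph V) (π : CliquePartition G t) :
    SimpleGraph (V ⊕ Fin t) :=
  SimpleGraph.fromRel fun a b =>
    match a, b with
    | Sum.inl u, Sum.inl v => G.Adj u v
    | Sum.inl v, Sum.inr i => v ∈ π.part i
    | _, _ => False

lemma whisker_adj_inl_inl {V : Type*} {t : ℕ} (G : SimpleGraph V) (π : CliquePartition G t)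
    (u v : V) : (whisker G π).Adj (Sum.inl u) (Sum.inl v) ↔ G.Adj u v := by
  simp only [whisker, SimpleGraph.fromRel_adj]
  constructor
  · rintro ⟨h, h1 | h1⟩
    · exact h1
    · exact h1.symm
  · intro h
    exact ⟨by simpa using h.ne, Or.inl h⟩

lemma whisker_adj_inl_inr {V : Type*} {t : ℕ} (G : SimpleGraph V) (π : CliquePartition G t)
    (v : V) (i : Fin t) : (whisker G π).Adj (Sum.inl v) (Sum.inr i) ↔ v ∈ π.part i := by
  simp [whisker, SimpleGraph.fromRel_adj]

lemma whisker_not_adj_inr_inr {V : Type*} {t : ℕ} (G : SimpleGraph V) (π : CliquePartition G t)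
    (i j : Fin t) : ¬ (whisker G π).Adj (Sum.inr i) (Sum.inr j) := by
  simp [whisker, SimpleGraph.fromRel_adj]

/-- A graph `G` is (isomorphic to) a full clique-whiskering of some graph if and only if
there exists a clique vertex-partition of `G` such that every clique in the partition
contains a vertex whose neighborhood in `G` is contained in the clique. -/
theorem isFullCliqueWhiskering_iff {V : Type} [Fintype V] (G : SimpleGraph V) :
    (∃ (W : Type) (_ : Fintype W) (H : SimpleGraph W) (t : ℕ)
        (π : CliquePartition H t), Nonempty (G ≃g whisker H π)) ↔
    (∃ (t : ℕ) (ρ : CliquePartition G t),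
        ∀ i, ∃ v ∈ ρ.part i, ∀ u, G.Adj v u → u ∈ ρ.part i) := by
  classical
  constructor
  · rintro ⟨W, _, H, t, π, ⟨e⟩⟩
    have hmem : ∀ (i : Fin t) (v : V),
        (v ∈ Finset.univ.filter
          (fun v => e v = Sum.inr i ∨ ∃ u ∈ π.part i, e v = Sum.inl u)) ↔
        (e v = Sum.inr i ∨ ∃ u ∈ π.part i, e v = Sum.inl u) := by
      intro i v; simp
    refine ⟨t, ⟨fun i => Finset.univ.filter
        (fun v => e v = Sum.inr i ∨ ∃ u ∈ π.part i, e v = Sum.inl u), ?_, ?_, ?_⟩, ?_⟩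
    · intro i j hij
      rw [Finset.disjoint_left]
      intro v hvi hvj
      rw [hmem] at hvi hvj
      rcases hvi with h1 | ⟨u, hu, h1⟩ <;> rcases hvj with h2 | ⟨u', hu', h2⟩
      · exact hij (by simpa using h1.symm.trans h2)
      · simp [h1] at h2
      · simp [h2] at h1
      · rw [h1] at h2
        have : u = u' := by simpa using h2
        subst this
        exact (Finset.disjoint_left.mp (π.disj i j hij) hu) hu'
    · intro v
      rcases h : e v with u | i
      · obtain ⟨i, hi⟩ := π.cover u
        exact ⟨i, (hmem i v).mpr (Or.inr ⟨u, hi, h⟩)⟩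
      · exact ⟨i, (hmem i v).mpr (Or.inl h)⟩
    · intro i a ha b hb hab
      simp only [Finset.coe_filter, Set.mem_setOf_eq] at ha hb
      have hab' : e a ≠ e b := fun h => hab (e.injective h)
      have : (whisker H π).Adj (e a) (e b) := by
        rcases ha.2 with h1 | ⟨u, hu, h1⟩ <;> rcases hb.2 with h2 | ⟨u', hu', h2⟩
        · exact absurd (h1.trans h2.symm) hab'
        · rw [h1, h2]
          exact ((whisker_adj_inl_inr H π u' i).mpr hu').symm
        · rw [h1, h2]
          exact (whisker_adj_inl_inr H π u i).mpr hu
        · rw [h1, h2]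
          rw [whisker_adj_inl_inl]
          refine π.clique i hu hu' ?_
          rw [h1, h2] at hab'
          simpa using hab'
      exact e.map_adj_iff.mp this
    · intro i
      refine ⟨e.symm (Sum.inr i), (hmem i _).mpr (Or.inl (by simp)), ?_⟩
      intro u hadj
      have : (whisker H π).Adj (Sum.inr i) (e u) := by
        have := e.map_adj_iff.mpr hadj
        simpa using this
      rcases h : e u with w | j
      · rw [h] at this
        have hw : w ∈ π.part i := (whisker_adj_inl_inr H π w i).mp this.symm
        exact (hmem i u).mpr (Or.inr ⟨w, hw, h⟩)
      · rw [h] at this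
        exact absurd this (whisker_not_adj_inr_inr H π i j)
  · rintro ⟨t, ρ, hρ⟩
    choose c hc hN using hρ
    have hcinj : Function.Injective c := by
      intro i j h
      by_contra hij
      exact Finset.disjoint_left.mp (ρ.disj i j hij) (hc i) (h ▸ hc j)
    have hcadj : ∀ i j, ¬ G.Adj (c i) (c j) := by
      intro i j hadj
      rcases eq_or_ne i j with rfl | hij
      · exact G.irrefl hadj
      · exact Finset.disjoint_left.mp (ρ.disj i j hij) (hN i _ hadj) (hc j)
    set W := {v : V // ∀ i, v ≠ c i} with hW
    have : Fintype W := Fintype.ofFinite W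
    set H : SimpleGraph W := G.comap Subtype.val with hH
    have pdisj : ∀ i j, i ≠ j → Disjoint ((ρ.part i).subtype (fun v => ∀ j, v ≠ c j))
        ((ρ.part j).subtype (fun v => ∀ j, v ≠ c j)) := by
      intro i j hij
      rw [Finset.disjoint_left]
      intro w hwi hwj
      rw [Finset.mem_subtype] at hwi hwj
      exact Finset.disjoint_left.mp (ρ.disj i j hij) hwi hwj
    have pcover : ∀ w : W, ∃ i, w ∈ (ρ.part i).subtype (fun v => ∀ j, v ≠ c j) := by
      intro w
      obtain ⟨i, hi⟩ := ρ.cover w.val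
      exact ⟨i, Finset.mem_subtype.mpr hi⟩
    have pclique : ∀ i, H.IsClique (((ρ.part i).subtype (fun v => ∀ j, v ≠ c j) : Finset W) : Set W) := by
      intro i a ha b hb hab
      rw [Finset.mem_coe, Finset.mem_subtype] at ha hb
      exact ρ.clique i ha hb (fun h => hab (Subtype.ext h))
    set π : CliquePartition H t :=
      ⟨fun i => (ρ.part i).subtype (fun v => ∀ j, v ≠ c j), pdisj, pcover, pclique⟩ with hπ
    set g : W ⊕ Fin t → V := Sum.elim Subtype.val c with hg
    have hginj : Function.Injective g := by
      rintro (a | i) (b | j) h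
      · exact congrArg Sum.inl (Subtype.ext h)
      · exact absurd h (a.prop j)
      · exact absurd h.symm (b.prop i)
      · exact congrArg Sum.inr (hcinj h)
    have hgsurj : Function.Surjective g := by
      intro v
      by_cases h : ∃ i, v = c i
      · obtain ⟨i, rfl⟩ := h
        exact ⟨Sum.inr i, rfl⟩
      · push_neg at h
        exact ⟨Sum.inl ⟨v, h⟩, rfl⟩
    have key : ∀ x y, G.Adj (g x) (g y) ↔ (whisker H π).Adj x y := by
      rintro (a | i) (b | j)
      · rw [whisker_adj_inl_inl]
        exact Iff.rfl
      · rw [whisker_adj_inl_inr]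
        simp only [hπ]
        rw [Finset.mem_subtype]
        constructor
        · intro h
          exact hN j a.val h.symm
        · intro h
          exact ((ρ.clique j) h (Finset.mem_coe.mpr (hc j)) (a.prop j))
      · rw [SimpleGraph.adj_comm, ((whisker H π).adj_comm _ _), whisker_adj_inl_inr]
        simp only [hπ]
        rw [Finset.mem_subtype]
        constructor
        · intro h
          exact hN i b.val h.symm
        · intro h
          exact ((ρ.clique i) h (Finset.mem_coe.mpr (hc i)) (b.prop i))
      · simp only [hg, Sum.elim_inr]
        exact iff_of_false (hcadj i j) (whisker_not_adj_inr_inr H π i j)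
    refine ⟨W, inferInstance, H, t, π, ⟨?_⟩⟩
    exact (RelIso.mk (Equiv.ofBijective g ⟨hginj, hgsurj⟩) (fun {x y} => key x y)).symm
end

section
/- Let G be a finite simple graph and let π = (W_1, …, W_t) be a clique vertex-partition of G. Then the h-vector of the independence complex Ind(G^π) (which is pure of dimension t − 1) equals the face vector of Ind(G): for every j with 0 ≤ j ≤ t, the number of independent sets of cardinality j in the clique-whiskered graph G^π equals Σ_{i=0}^{j} C(t−i, j−i) · f_{i−1}(G), where f_{i−1}(G) is the number of independent sets of cardinality i in G. -/
/-- A finset of vertices is an independent set of the graph `G`. -/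
def IsIndep {V : Type*} (G : SimpleGraph V) (s : Finset V) : Prop :=
  ∀ u ∈ s, ∀ v ∈ s, ¬ G.Adj u v

/-- The number of independent sets of cardinality `k` in `G`
(the face number `f_{k-1}` of the independence complex of `G`). -/
noncomputable def indepCount {V : Type*} (G : SimpleGraph V) (k : ℕ) : ℕ :=
  Set.ncard {s : Finset V | IsIndep G s ∧ s.card = k}

section helpers
variable {V : Type*} {t : ℕ} (G : SimpleGraph V) (π : CliquePartition G t)

lemma whisker_adj_ll {u v : V} : (whisker G π).Adj (.inl u) (.inl v) ↔ G.Adj u v := by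
  simp only [whisker, SimpleGraph.fromRel_adj]
  constructor
  · rintro ⟨-, h | h⟩; exact h; exact h.symm
  · intro h; exact ⟨by simp [h.ne], Or.inl h⟩

lemma whisker_adj_lr {v : V} {i : Fin t} :
    (whisker G π).Adj (.inl v) (.inr i) ↔ v ∈ π.part i := by
  simp [whisker, SimpleGraph.fromRel_adj]

lemma whisker_not_adj_rr {i i' : Fin t} : ¬ (whisker G π).Adj (.inr i) (.inr i') := by
  simp [whisker, SimpleGraph.fromRel_adj]

lemma indep_whisker_iff (sL : Finset V) (sR : Finset (Fin t)) :
    IsIndep (whisker G π) (sL.disjSum sR) ↔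
      IsIndep G sL ∧ ∀ i ∈ sR, ∀ v ∈ sL, v ∉ π.part i := by
  constructor
  · intro h
    refine ⟨fun u hu v hv hadj => ?_, fun i hi v hv hvi => ?_⟩
    · exact h (.inl u) (by simp [hu]) (.inl v) (by simp [hv])
        ((whisker_adj_ll G π).2 hadj)
    · exact h (.inl v) (by simp [hv]) (.inr i) (by simp [hi])
        ((whisker_adj_lr G π).2 hvi)
  · rintro ⟨h1, h2⟩ a ha b hb hadj
    match a, b with
    | Sum.inl u, Sum.inl v =>
        exact h1 u (by simpa using ha) v (by simpa using hb)
          ((whisker_adj_ll G π).1 hadj)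
    | Sum.inl v, Sum.inr i =>
        exact h2 i (by simpa using hb) v (by simpa using ha)
          ((whisker_adj_lr G π).1 hadj)
    | Sum.inr i, Sum.inl v =>
        exact h2 i (by simpa using ha) v (by simpa using hb)
          ((whisker_adj_lr G π).1 hadj.symm)
    | Sum.inr i, Sum.inr i' => exact whisker_not_adj_rr G π hadj

noncomputable def pidx {V : Type*} {t : ℕ} {G : SimpleGraph V} (π : CliquePartition G t) (v : V) : Fin t := (π.cover v).choose

lemma mem_pidx (v : V) : v ∈ π.part (pidx π v) := (π.cover v).choose_spec

lemma pidx_unique {v : V} {i : Fin t} (h : v ∈ π.part i) : i = pidx π v := by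
  by_contra hne
  exact Finset.disjoint_left.1 (π.disj i (pidx π v) hne) h (mem_pidx G π v)

end helpers

lemma indepCount_eq {V : Type*} [Fintype V] [DecidableEq V] (G : SimpleGraph V) (k : ℕ)
    [DecidablePred fun s : Finset V => IsIndep G s ∧ s.card = k] :
    indepCount G k = (Finset.univ.filter fun s : Finset V => IsIndep G s ∧ s.card = k).card := by
  rw [indepCount, ← Set.ncard_coe_finset]
  congr 1
  ext s
  simp

/-- The `h`-vector of the independence complex of the clique-whiskered graph `G^π`
(pure of dimension `t - 1`) is the face vector of the independence complex of `G`: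
for `0 ≤ j ≤ t` the number of independent sets of cardinality `j` in `G^π` equals
`∑_{i=0}^{j} C(t-i, j-i) · f_{i-1}(G)`. -/
theorem whisker_h_eq_f {V : Type*} [Fintype V] (G : SimpleGraph V) {t : ℕ}
    (π : CliquePartition G t) (j : ℕ) (hj : j ≤ t) :
    indepCount (whisker G π) j =
      ∑ i ∈ Finset.range (j + 1), (t - i).choose (j - i) * indepCount G i := by
  classical
  rw [indepCount_eq]
  rw [Finset.card_eq_sum_card_fiberwise
      (f := fun s : Finset (V ⊕ Fin t) => s.toLeft.card) (t := Finset.range (j + 1))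
      (by intro s hs
          simp only [Finset.mem_coe, Finset.mem_filter] at hs ⊢
          rw [Finset.mem_range, Nat.lt_succ_iff, ← hs.2.2]
          exact Finset.card_toLeft_le)]
  refine Finset.sum_congr rfl fun i hi => ?_
  rw [Finset.mem_range, Nat.lt_succ_iff] at hi
  -- fiber over i
  rw [Finset.card_eq_sum_card_fiberwise
      (f := fun s : Finset (V ⊕ Fin t) => s.toLeft)
      (t := Finset.univ.filter fun s : Finset V => IsIndep G s ∧ s.card = i)
      (by intro s hs
          simp only [Finset.mem_coe, Finset.mem_filter, Finset.mem_univ, true_and] at hs ⊢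
          obtain ⟨⟨hind, -⟩, hcard⟩ := hs
          rw [← Finset.toLeft_disjSum_toRight (u := s)] at hind
          exact ⟨((indep_whisker_iff G π _ _).1 hind).1, hcard⟩)]
  rw [indepCount_eq]
  rw [Finset.sum_congr rfl (g := fun _ => (t - i).choose (j - i)) ?inner, Finset.sum_const,
    smul_eq_mul]
  · ring
  intro sL hsL
  simp only [Finset.mem_filter, Finset.mem_univ, true_and] at hsL
  obtain ⟨hLind, hLcard⟩ := hsL
  -- card of image of pidx
  have himg : (sL.image (pidx π)).card = i := by
    rw [Finset.card_image_of_injOn, hLcard]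
    intro u hu v hv huv
    by_contra hne
    exact hLind u hu v hv (π.clique (pidx π u) (mem_pidx G π u)
      (by rw [huv]; exact mem_pidx G π v) hne)
  have hcompl : ((sL.image (pidx π))ᶜ : Finset (Fin t)).card = t - i := by
    rw [Finset.card_compl, himg, Fintype.card_fin]
  have hpc : (Finset.powersetCard (j - i) ((sL.image (pidx π))ᶜ)).card
      = (t - i).choose (j - i) := by
    rw [Finset.card_powersetCard, hcompl]
  rw [← hpc]
  -- bijection
  refine Finset.card_nbij' (fun s => s.toRight) (fun sR => sL.disjSum sR) ?_ ?_ ?_ ?_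
  · intro s hs
    simp only [Finset.mem_coe, Finset.mem_filter, Finset.mem_univ, true_and] at hs ⊢
    obtain ⟨⟨⟨hind, hcard⟩, hLc⟩, hL⟩ := hs
    have hind' := hind
    rw [← Finset.toLeft_disjSum_toRight (u := s), indep_whisker_iff] at hind'
    rw [Finset.mem_powersetCard]
    constructor
    · intro k hk
      rw [Finset.mem_compl]
      intro hmem
      rw [Finset.mem_image] at hmem
      obtain ⟨v, hv, hvk⟩ := hmem
      rw [← hL] at hv
      exact hind'.2 k hk v hv (hvk ▸ mem_pidx G π v)
    · have := Finset.card_toLeft_add_card_toRight (u := s)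
      show s.toRight.card = j - i
      omega
  · intro sR hsR
    rw [Finset.mem_coe, Finset.mem_powersetCard] at hsR
    simp only [Finset.mem_coe, Finset.mem_filter, Finset.mem_univ, true_and, Finset.toLeft_disjSum]
    refine ⟨⟨⟨?_, ?_⟩, hLcard⟩, trivial⟩
    · rw [indep_whisker_iff]
      refine ⟨hLind, fun k hk v hv hvk => ?_⟩
      have := hsR.1 hk
      rw [Finset.mem_compl] at this
      exact this (Finset.mem_image.2 ⟨v, hv, (pidx_unique G π hvk).symm⟩)
    · rw [Finset.card_disjSum, hLcard, hsR.2]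
      omega
  · intro s hs
    simp only [Finset.mem_coe, Finset.mem_filter] at hs
    rw [← hs.2]
    show s.toLeft.disjSum s.toRight = s
    exact Finset.toLeft_disjSum_toRight
  · intro sR hsR
    simp
end
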